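/- Let R be a finite commutative chain ring with maximal ideal ⟨γ⟩ and residue field R/⟨γ⟩, and let A ∈ M_{s×l}(R) with s ≤ l. Then A is non-singular by columns (NSC) if and only if its entrywise reduction Ā ∈ M_{s×l}(R/⟨γ⟩) modulo ⟨γ⟩ is non-singular by columns. -/
import Mathlib


open Matrix BigOperators

/-- A matrix `A ∈ M_{s×l}(S)` with `s ≤ l` is non-singular by columns (NSC) if for every
`1 ≤ t ≤ s`, every `t×t` submatrix of the matrix consisting of the upper `t` rows of `A`
is non-singular (its determinant is a unit). -/
def NSC {S : Type*} [CommRing S] {s l : ℕ} (A : Matrix (Fin s) (Fin l) S) : Prop :=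
  ∀ (t : ℕ), 0 < t → ∀ (hts : t ≤ s) (f : Fin t → Fin l), StrictMono f →
    IsUnit (Matrix.det (Matrix.of fun i j : Fin t => A (Fin.castLE hts i) (f j)))

/-- Over a finite commutative chain ring `R` with maximal ideal `⟨γ⟩`, a matrix
`A ∈ M_{s×l}(R)` (with `s ≤ l`) is NSC iff its entrywise reduction modulo `⟨γ⟩` is NSC. -/
theorem nsc_iff_nsc_reduction {R : Type*} [CommRing R] [Fintype R] [IsLocalRing R]
    (γ : R) (hγ : Ideal.span {γ} = IsLocalRing.maximalIdeal R)
    {s l : ℕ} (hsl : s ≤ l) (A : Matrix (Fin s) (Fin l) R) :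
    NSC A ↔ NSC (A.map (Ideal.Quotient.mk (Ideal.span {γ}))) := by
  haveI hmax : (Ideal.span {γ} : Ideal R).IsMaximal := hγ ▸ inferInstance
  have key : ∀ a : R, IsUnit (Ideal.Quotient.mk (Ideal.span {γ}) a) ↔ IsUnit a := by
    intro a
    constructor
    · intro h
      by_contra hu
      have hm : a ∈ Ideal.span {γ} := by
        rw [hγ]
        exact hu
      rw [← Ideal.Quotient.eq_zero_iff_mem] at hm
      rw [hm] at h
      exact not_isUnit_zero h
    · intro h
      exact h.map _
  constructor
  · intro h t ht hts f hf
    have := h t ht hts f hf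
    have heq : (Matrix.of fun i j : Fin t =>
        (A.map (Ideal.Quotient.mk (Ideal.span {γ}))) (Fin.castLE hts i) (f j)) =
        (Matrix.of fun i j : Fin t => A (Fin.castLE hts i) (f j)).map
          (Ideal.Quotient.mk (Ideal.span {γ})) := rfl
    rw [heq, ← RingHom.mapMatrix_apply, ← RingHom.map_det]
    exact this.map _
  · intro h t ht hts f hf
    have := h t ht hts f hf
    have heq : (Matrix.of fun i j : Fin t =>
        (A.map (Ideal.Quotient.mk (Ideal.span {γ}))) (Fin.castLE hts i) (f j)) =
        (Matrix.of fun i j : Fin t => A (Fin.castLE hts i) (f j)).map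
          (Ideal.Quotient.mk (Ideal.span {γ})) := rfl
    rw [heq, ← RingHom.mapMatrix_apply, ← RingHom.map_det] at this
    exact (key _).mp this
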